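/- Let α₀ > 0 and Re > 0 be constants and let T > 0. Suppose H₀, H₁ : [0,∞) → ℝ are continuous, H₀ is differentiable and strictly positive, H₁ is nonnegative, and (1/2)·H₀'(t) + Re⁻¹·H₁(t) ≤ α₀·H₀(t) for all t ≥ 0. Then the time average of the ratio satisfies ⟨H₁/H₀⟩_T ≤ Re·[ α₀ + (1/(2T))·ln( H₀(0)/H₀(T) ) ]. -/

import Mathlib

/-- If `H₀ > 0` is differentiable, `H₁ ≥ 0`, and
`(1/2)·H₀' + Re⁻¹·H₁ ≤ α₀·H₀` on `[0,∞)`, then for `T > 0` the time average of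
the ratio satisfies `⟨H₁/H₀⟩_T ≤ Re·[α₀ + (1/(2T))·ln(H₀(0)/H₀(T))]`. -/
theorem toner_tu_time_averaged_ratio (α₀ Re : ℝ) (hα : 0 < α₀) (hRe : 0 < Re)
    (T : ℝ) (hT : 0 < T)
    (H₀ H₀' H₁ : ℝ → ℝ)
    (hH₀c : ContinuousOn H₀ (Set.Ici (0:ℝ)))
    (hH₁c : ContinuousOn H₁ (Set.Ici (0:ℝ)))
    (hderiv : ∀ t ≥ (0:ℝ), HasDerivAt H₀ (H₀' t) t)
    (hH₀pos : ∀ t ≥ (0:ℝ), 0 < H₀ t)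
    (hH₁nn : ∀ t ≥ (0:ℝ), 0 ≤ H₁ t)
    (hineq : ∀ t ≥ (0:ℝ), (1/2) * H₀' t + Re⁻¹ * H₁ t ≤ α₀ * H₀ t) :
    (1/T) * ∫ τ in (0:ℝ)..T, H₁ τ / H₀ τ ≤
      Re * (α₀ + (1/(2*T)) * Real.log (H₀ 0 / H₀ T)) := by
  set f : ℝ → ℝ := fun τ => H₁ τ / H₀ τ with hf
  have hfc : ContinuousOn f (Set.Ici (0:ℝ)) :=
    hH₁c.div hH₀c (fun t ht => ne_of_gt (hH₀pos t ht))
  have huIcc : Set.uIcc (0:ℝ) T = Set.Icc 0 T := Set.uIcc_of_le hT.le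
  have hsub : Set.Icc (0:ℝ) T ⊆ Set.Ici 0 := fun s hs => hs.1
  have hfint : IntervalIntegrable f MeasureTheory.volume 0 T :=
    (hfc.mono (huIcc ▸ hsub)).intervalIntegrable
  set φ : ℝ → ℝ := fun t => Re * α₀ * t - (Re/2) * Real.log (H₀ t)
      - ∫ τ in (0:ℝ)..t, f τ with hφ
  have hmono : MonotoneOn φ (Set.Icc (0:ℝ) T) := by
    apply monotoneOn_of_hasDerivWithinAt_nonneg (convex_Icc 0 T)
      (f' := fun t => Re * α₀ - (Re/2) * (H₀' t / H₀ t) - f t)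
    · apply ContinuousOn.sub
      · exact ((continuousOn_const.mul continuousOn_id).sub
          (continuousOn_const.mul
            (((hH₀c.mono hsub).log (fun t ht => ne_of_gt (hH₀pos t (hsub ht)))))))
      · exact huIcc ▸ intervalIntegral.continuousOn_primitive_interval'
          hfint (huIcc ▸ Set.left_mem_Icc.mpr hT.le)
    · intro t ht
      rw [interior_Icc] at ht
      have ht0 : (0:ℝ) < t := ht.1
      have hd1 : HasDerivAt (fun t => Re * α₀ * t - (Re/2) * Real.log (H₀ t))
          (Re * α₀ - (Re/2) * (H₀' t / H₀ t)) t := by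
        have := ((hasDerivAt_id t).const_mul (Re * α₀)).sub
          (((hderiv t ht0.le).log (ne_of_gt (hH₀pos t ht0.le))).const_mul (Re/2))
        simp only [mul_one] at this; exact this
      have hca : ContinuousAt f t := hfc.continuousAt (Ici_mem_nhds ht0)
      have hmeas : StronglyMeasurableAtFilter f (nhds t) MeasureTheory.volume :=
        ContinuousOn.stronglyMeasurableAtFilter isOpen_Ioi
          (hfc.mono (Set.Ioi_subset_Ici le_rfl)) t ht0
      have hd2 : HasDerivAt (fun u => ∫ τ in (0:ℝ)..u, f τ) (f t) t :=
        intervalIntegral.integral_hasDerivAt_right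
          ((hfc.mono (fun s hs => by
            rw [Set.uIcc_of_le ht0.le] at hs; exact hs.1)).intervalIntegrable)
          hmeas hca
      exact (hd1.sub hd2).hasDerivWithinAt
    · intro t ht
      rw [interior_Icc] at ht
      have ht0 : (0:ℝ) ≤ t := ht.1.le
      have hpos := hH₀pos t ht0
      have key : (1/2) * (H₀' t / H₀ t) + Re⁻¹ * (H₁ t / H₀ t) ≤ α₀ := by
        rw [show (1/2) * (H₀' t / H₀ t) + Re⁻¹ * (H₁ t / H₀ t)
            = ((1/2) * H₀' t + Re⁻¹ * H₁ t) / H₀ t by ring, div_le_iff₀ hpos]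
        linarith [hineq t ht0]
      have key2 : (Re/2) * (H₀' t / H₀ t) + f t ≤ Re * α₀ := by
        calc (Re/2) * (H₀' t / H₀ t) + f t
            = Re * ((1/2) * (H₀' t / H₀ t) + Re⁻¹ * (H₁ t / H₀ t)) := by
              simp only [hf]; field_simp
          _ ≤ Re * α₀ := by nlinarith
      linarith
  have h0T : φ 0 ≤ φ T :=
    hmono (Set.left_mem_Icc.mpr hT.le) (Set.right_mem_Icc.mpr hT.le) hT.le
  have hint : ∫ τ in (0:ℝ)..T, f τ ≤ Re * α₀ * T + (Re/2) * Real.log (H₀ 0 / H₀ T) := by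
    rw [Real.log_div (ne_of_gt (hH₀pos 0 le_rfl)) (ne_of_gt (hH₀pos T hT.le))]
    simp only [hφ, intervalIntegral.integral_same] at h0T
    nlinarith [h0T]
  calc (1/T) * ∫ τ in (0:ℝ)..T, f τ
      ≤ (1/T) * (Re * α₀ * T + (Re/2) * Real.log (H₀ 0 / H₀ T)) :=
        mul_le_mul_of_nonneg_left hint (by positivity)
    _ = Re * (α₀ + (1/(2*T)) * Real.log (H₀ 0 / H₀ T)) := by field_simp
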